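/- Let M₁ and M₂ be matroids on disjoint finite ground sets E₁ and E₂, and let e₁ ∈ E₁, e₂ ∈ E₂ be elements, each neither a loop nor a coloop of its matroid. Suppose S is a matroid on (E₁ ∪ E₂) \ {e₁, e₂} whose bases are exactly the sets (B₁ ∪ B₂) \ {e₁, e₂} with B₁ a basis of M₁, B₂ a basis of M₂, and |(B₁ ∪ B₂) ∩ {e₁, e₂}| = 1. Then the bases of the dual matroid S* are exactly the sets (B₁ ∪ B₂) \ {e₁, e₂} with B₁ a basis of M₁*, B₂ a basis of M₂*, and |(B₁ ∪ B₂) ∩ {e₁, e₂}| = 1. In other words, ((M₁, e₁) ⊕₂ (M₂, e₂))* = (M₁*, e₁) ⊕₂ (M₂*, e₂). -/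

import Mathlib

open Set

/-- A circuit of a matroid: a minimal dependent set. -/
def IsCircuit {α : Type*} (M : Matroid α) (C : Set α) : Prop :=
  M.Dep C ∧ ∀ D ⊂ C, ¬ M.Dep D

/-- Matroid isomorphism: a bijection carrying the ground set onto the ground set and
the circuits exactly onto the circuits. -/
def MatroidIso {α β : Type*} (M : Matroid α) (N : Matroid β) : Prop :=
  ∃ φ : α ≃ β, φ '' M.E = N.E ∧ ∀ C ⊆ M.E, (IsCircuit M C ↔ IsCircuit N (φ '' C))

/-- The rank of a set in a matroid: the largest cardinality of an independent subset. -/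
noncomputable def mrank {α : Type*} (M : Matroid α) (X : Set α) : ℕ :=
  sSup {n | ∃ I, I ⊆ X ∧ M.Indep I ∧ I.ncard = n}

/-- A matroid is 2-connected if no proper nonempty subset `T` of the ground set satisfies
`rank T + rank (E \ T) = rank E`. -/
def TwoConnected {α : Type*} (M : Matroid α) : Prop :=
  ∀ T ⊆ M.E, T.Nonempty → T ≠ M.E → mrank M T + mrank M (M.E \ T) ≠ mrank M M.E
/-- An element is a loop if it forms a one-element circuit. -/
def IsLoopElem {α : Type*} (M : Matroid α) (e : α) : Prop := IsCircuit M {e}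

/-- An element is a coloop if it is a loop of the dual matroid. -/
def IsColoopElem {α : Type*} (M : Matroid α) (e : α) : Prop := IsCircuit M✶ {e}

/-- The 2-sum circuit family of `(M₁, e₁)` and `(M₂, e₂)` (with the disjoint union of the
ground sets modelled by the sum type): circuits of `M₁` avoiding `e₁`, circuits of `M₂`
avoiding `e₂`, and unions `(C₁ \ {e₁}) ∪ (C₂ \ {e₂})` for circuits `Cᵢ` through `eᵢ`. -/
def twoSumCircuits {α β : Type*} (M₁ : Matroid α) (M₂ : Matroid β) (e₁ : α) (e₂ : β) :
    Set (Set (α ⊕ β)) :=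
  {C | (∃ C₁, IsCircuit M₁ C₁ ∧ e₁ ∉ C₁ ∧ C = Sum.inl '' C₁) ∨
       (∃ C₂, IsCircuit M₂ C₂ ∧ e₂ ∉ C₂ ∧ C = Sum.inr '' C₂) ∨
       (∃ C₁ C₂, IsCircuit M₁ C₁ ∧ IsCircuit M₂ C₂ ∧ e₁ ∈ C₁ ∧ e₂ ∈ C₂ ∧
          C = Sum.inl '' (C₁ \ {e₁}) ∪ Sum.inr '' (C₂ \ {e₂}))}

/-- The dual of a 2-sum is the 2-sum of the duals: if the bases of `S` are the sets
`(B₁ ∪ B₂) \ {e₁, e₂}` with `Bᵢ` a base of `Mᵢ` and `|(B₁ ∪ B₂) ∩ {e₁, e₂}| = 1`, then the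
bases of `S✶` are exactly the analogous sets formed from bases of `M₁✶` and `M₂✶`. -/


lemma card_cond {α β : Type} (e₁ : α) (e₂ : β) (B₁ : Set α) (B₂ : Set β) :
    ((Sum.inl '' B₁ ∪ Sum.inr '' B₂) ∩ {Sum.inl e₁, Sum.inr e₂}).ncard = 1 ↔
      Xor' (e₁ ∈ B₁) (e₂ ∈ B₂) := by
  by_cases h₁ : e₁ ∈ B₁ <;> by_cases h₂ : e₂ ∈ B₂ <;>
    simp only [Xor', h₁, h₂, true_and, false_and, and_true, and_false, not_true, not_false_iff,
      or_false, false_or, iff_true, iff_false]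
  · have : (Sum.inl '' B₁ ∪ Sum.inr '' B₂) ∩ {Sum.inl e₁, Sum.inr e₂} =
        {Sum.inl e₁, Sum.inr e₂} := by
      ext x; cases x <;> simp_all
    rw [this, Set.ncard_pair (by simp)]; simp
  · have : (Sum.inl '' B₁ ∪ Sum.inr '' B₂) ∩ {Sum.inl e₁, Sum.inr e₂} =
        {Sum.inl e₁} := by ext x; cases x <;> simp_all <;> rintro h rfl <;> simp_all
    simp [this]
  · have : (Sum.inl '' B₁ ∪ Sum.inr '' B₂) ∩ {Sum.inl e₁, Sum.inr e₂} =
        {Sum.inr e₂} := by ext x; cases x <;> simp_all <;> rintro h rfl <;> simp_all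
    simp [this]
  · have : (Sum.inl '' B₁ ∪ Sum.inr '' B₂) ∩ {Sum.inl e₁, Sum.inr e₂} = ∅ := by
      ext x; cases x <;> simp_all <;> rintro h rfl <;> simp_all
    simp [this]

lemma compl_lemma {α β : Type} (e₁ : α) (e₂ : β) (B₁ : Set α) (B₂ : Set β) :
    (univ \ {Sum.inl e₁, Sum.inr e₂}) \
        ((Sum.inl '' B₁ ∪ Sum.inr '' B₂) \ {Sum.inl e₁, Sum.inr e₂}) =
      (Sum.inl '' B₁ᶜ ∪ Sum.inr '' B₂ᶜ) \ {Sum.inl e₁, Sum.inr e₂} := by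
  ext x; cases x <;> simp <;> tauto


theorem dual_twoSum {α β : Type} [Fintype α] [Fintype β]
    (M₁ : Matroid α) (M₂ : Matroid β) (hM₁ : M₁.E = Set.univ) (hM₂ : M₂.E = Set.univ)
    (e₁ : α) (e₂ : β)
    (he₁ : ¬ IsLoopElem M₁ e₁ ∧ ¬ IsColoopElem M₁ e₁)
    (he₂ : ¬ IsLoopElem M₂ e₂ ∧ ¬ IsColoopElem M₂ e₂)
    (S : Matroid (α ⊕ β))
    (hSE : S.E = Set.univ \ {Sum.inl e₁, Sum.inr e₂})
    (hS : ∀ B, S.IsBase B ↔ ∃ B₁ B₂, M₁.IsBase B₁ ∧ M₂.IsBase B₂ ∧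
        ((Sum.inl '' B₁ ∪ Sum.inr '' B₂) ∩ {Sum.inl e₁, Sum.inr e₂}).ncard = 1 ∧
        B = (Sum.inl '' B₁ ∪ Sum.inr '' B₂) \ {Sum.inl e₁, Sum.inr e₂}) :
    ∀ B, S✶.IsBase B ↔ ∃ B₁ B₂, M₁✶.IsBase B₁ ∧ M₂✶.IsBase B₂ ∧
        ((Sum.inl '' B₁ ∪ Sum.inr '' B₂) ∩ {Sum.inl e₁, Sum.inr e₂}).ncard = 1 ∧
        B = (Sum.inl '' B₁ ∪ Sum.inr '' B₂) \ {Sum.inl e₁, Sum.inr e₂} := by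
  intro B
  rw [Matroid.dual_isBase_iff']
  constructor
  · rintro ⟨hBase, hBE⟩
    obtain ⟨B₁, B₂, hB₁, hB₂, hcard, heq⟩ := (hS _).mp hBase
    refine ⟨B₁ᶜ, B₂ᶜ, ?_, ?_, ?_, ?_⟩
    · rw [Matroid.dual_isBase_iff (by rw [hM₁]; exact subset_univ _)]
      have : M₁.E \ B₁ᶜ = B₁ := by rw [hM₁]; simp [Set.diff_eq, compl_compl]
      rwa [this]
    · rw [Matroid.dual_isBase_iff (by rw [hM₂]; exact subset_univ _)]
      have : M₂.E \ B₂ᶜ = B₂ := by rw [hM₂]; simp [Set.diff_eq, compl_compl]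
      rwa [this]
    · rw [card_cond] at hcard ⊢
      simp only [Set.mem_compl_iff]
      rcases hcard with ⟨h, h'⟩ | ⟨h, h'⟩
      · exact Or.inr ⟨h', fun hc => hc h⟩
      · exact Or.inl ⟨h', fun hc => hc h⟩
    · have hB : B = S.E \ (S.E \ B) := (Set.diff_diff_cancel_left hBE).symm
      rw [hB, heq, hSE, compl_lemma]
  · rintro ⟨B₁, B₂, hB₁, hB₂, hcard, rfl⟩
    have hBE : (Sum.inl '' B₁ ∪ Sum.inr '' B₂) \ {Sum.inl e₁, Sum.inr e₂} ⊆ S.E := by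
      rw [hSE]; exact Set.diff_subset_diff_left (subset_univ _)
    refine ⟨?_, hBE⟩
    rw [hS]
    refine ⟨B₁ᶜ, B₂ᶜ, ?_, ?_, ?_, ?_⟩
    · have := (Matroid.dual_isBase_iff (M := M₁) (B := B₁)
        (by rw [hM₁]; exact subset_univ _)).mp hB₁
      have hE : M₁.E \ B₁ = B₁ᶜ := by rw [hM₁]; simp [Set.diff_eq]
      rwa [hE] at this
    · have := (Matroid.dual_isBase_iff (M := M₂) (B := B₂)
        (by rw [hM₂]; exact subset_univ _)).mp hB₂
      have hE : M₂.E \ B₂ = B₂ᶜ := by rw [hM₂]; simp [Set.diff_eq]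
      rwa [hE] at this
    · rw [card_cond] at hcard ⊢
      simp only [Set.mem_compl_iff]
      rcases hcard with ⟨h, h'⟩ | ⟨h, h'⟩
      · exact Or.inr ⟨h', fun hc => hc h⟩
      · exact Or.inl ⟨h', fun hc => hc h⟩
    · rw [hSE, compl_lemma]
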